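/- Let A be a finite commutative Frobenius ring, C ⊆ A^l an A-submodule, C_2 = {c ∈ C : c_1 = 0}, and C' ⊆ A^{l−1} the code obtained by puncturing C_2 at the first coordinate. Then the map φ : C^⊥ → C'^⊥ given by φ(c_1,…,c_l) = (c_2,…,c_l) is a well-defined surjective A-linear map, whose kernel is {(c_1,0,…,0) : c_1·g = 0 for every g ∈ π_1(C)}. -/

import Mathlib

/-- The dual code of `C ⊆ A^l` with respect to the standard bilinear form. -/
def dualCode {A : Type*} [CommRing A] {l : ℕ} (C : Submodule A (Fin l → A)) :
    Submodule A (Fin l → A) where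
  carrier := {e | ∀ c ∈ C, ∑ i, e i * c i = 0}
  zero_mem' := by intro c hc; simp
  add_mem' := by
    intro a b ha hb c hc
    have h1 := ha c hc
    have h2 := hb c hc
    simp only [Pi.add_apply, add_mul, Finset.sum_add_distrib, h1, h2, add_zero]
  smul_mem' := by
    intro r e he c hc
    have h := he c hc
    simp only [Pi.smul_apply, smul_eq_mul, mul_assoc, ← Finset.mul_sum, h, mul_zero]

/-- Let `A` be a finite commutative Frobenius ring, `C ⊆ A^{l+1}` an `A`-submodule,
`C'` the puncturing at the first coordinate of `C_2 = {c ∈ C : c_1 = 0}`. Then the map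
`φ : C^⊥ → C'^⊥`, `(c_1,…,c_{l+1}) ↦ (c_2,…,c_{l+1})` is a well-defined surjective
`A`-linear map with kernel `{(c_1,0,…,0) : c_1·g = 0 for every g ∈ π_1(C)}`. -/
theorem stmt13 {A : Type*} [CommRing A] [Fintype A] [Module.Injective A A] (l : ℕ)
    (C : Submodule A (Fin (l + 1) → A)) (C' : Submodule A (Fin l → A))
    (hC' : (C' : Set (Fin l → A)) = {c' | Fin.cons 0 c' ∈ C}) :
    (∀ e ∈ dualCode C, (fun j : Fin l => e j.succ) ∈ dualCode C') ∧
    (∀ (a : A) (e f : Fin (l + 1) → A),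
      (fun j : Fin l => (a • e + f) j.succ) =
        a • (fun j : Fin l => e j.succ) + fun j : Fin l => f j.succ) ∧
    (∀ e' ∈ dualCode C', ∃ e ∈ dualCode C, (fun j : Fin l => e j.succ) = e') ∧
    ({e : Fin (l + 1) → A | e ∈ dualCode C ∧ (fun j : Fin l => e j.succ) = 0}
      = {e : Fin (l + 1) → A | (∀ j : Fin l, e j.succ = 0) ∧ ∀ c ∈ C, e 0 * c 0 = 0}) := by
  refine ⟨?_, ?_, ?_, ?_⟩
  · intro e he c' hc'
    have hmem : Fin.cons (0 : A) c' ∈ C := by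
      have h1 : c' ∈ (C' : Set (Fin l → A)) := hc'
      rw [hC'] at h1; exact h1
    have := he _ hmem
    rw [Fin.sum_univ_succ] at this
    simpa using this
  · intro a e f
    funext j
    simp
  · intro e' he'
    -- linear maps on C
    set π : C →ₗ[A] A :=
      { toFun := fun c => (c : Fin (l+1) → A) 0
        map_add' := by intros; rfl
        map_smul' := by intros; rfl }
    set ψ : C →ₗ[A] A :=
      { toFun := fun c => -∑ j, e' j * (c : Fin (l+1) → A) j.succ
        map_add' := by
          intro x y
          simp [mul_add, Finset.sum_add_distrib]
          ring
        map_smul' := by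
          intro a x
          simp [Finset.mul_sum, mul_left_comm] }
    have hle : LinearMap.ker π ≤ LinearMap.ker ψ := by
      intro c hc
      have hc0 : (c : Fin (l+1) → A) 0 = 0 := hc
      have hmem : (fun j : Fin l => (c : Fin (l+1) → A) j.succ) ∈ C' := by
        rw [← SetLike.mem_coe, hC']
        show Fin.cons 0 _ ∈ C
        have : Fin.cons (0:A) (fun j : Fin l => (c : Fin (l+1) → A) j.succ)
            = (c : Fin (l+1) → A) := by
          rw [← hc0]; exact Fin.cons_self_tail _
        rw [this]; exact c.2
      have := he' _ hmem
      show ψ c = 0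
      simp only [ψ, LinearMap.coe_mk, AddHom.coe_mk]
      rw [show ∑ j, e' j * (c : Fin (l+1) → A) j.succ = 0 from this]
      simp
    set f : (C ⧸ LinearMap.ker π) →ₗ[A] A := (LinearMap.ker π).liftQ π le_rfl
    have finj : Function.Injective f := by
      rw [← LinearMap.ker_eq_bot]
      exact Submodule.ker_liftQ_eq_bot _ _ _ le_rfl
    set g : (C ⧸ LinearMap.ker π) →ₗ[A] A := (LinearMap.ker π).liftQ ψ hle
    obtain ⟨h, hh⟩ := Module.Injective.out f finj g
    refine ⟨Fin.cons (h 1) e', ?_, ?_⟩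
    · intro c hc
      rw [Fin.sum_univ_succ]
      simp only [Fin.cons_zero, Fin.cons_succ]
      have key : h (c 0) = ψ ⟨c, hc⟩ := by
        have := hh (Submodule.Quotient.mk (⟨c, hc⟩ : C))
        simpa [f, g, π, Submodule.liftQ_apply] using this
      have hmul : h (c 0) = h 1 * c 0 := by
        have : h (c 0 • (1:A)) = c 0 • h 1 := h.map_smul _ _
        simpa [mul_comm] using this
      have : h 1 * c 0 = -∑ j, e' j * c j.succ := by
        rw [← hmul, key]; rfl
      rw [this]; ring
    · funext j; simp
  · ext e
    simp only [Set.mem_setOf_eq]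
    constructor
    · rintro ⟨he, ht⟩
      have ht' : ∀ j : Fin l, e j.succ = 0 := fun j => congrFun ht j
      refine ⟨ht', fun c hc => ?_⟩
      have := he c hc
      rw [Fin.sum_univ_succ] at this
      simpa [ht'] using this
    · rintro ⟨ht, h0⟩
      refine ⟨fun c hc => ?_, funext fun j => ht j⟩
      rw [Fin.sum_univ_succ]
      simp [ht, h0 c hc]
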